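/- arXiv:math/0702142 — 2 statements merged into one kernel-verified Lean document; each statement's English description precedes it below -/
import Mathlib

section
/- Let R be an integral domain with quotient field K, let X be an indeterminate over R, and let * be a semistar operation on the polynomial ring R[X]. Define \bar{*} on R by E^{\bar{*}} = (E[X])^* ∩ K for each nonzero R-submodule E of K, where E[X] denotes the R[X]-submodule of K(X) generated by E. If * has finite character, then \bar{*} has finite character. -/
open Polynomial Pointwise

/-- A *semistar operation* on a domain `S` with quotient field `M`: a map on the
(nonzero) `S`-submodules of `M` satisfying `(aE)^* = aE^*`, `E ⊆ E^*`,
monotonicity and idempotency. -/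
structure IsSemistarOperation (S M : Type*) [CommRing S] [Field M] [Algebra S M]
    (star : Submodule S M → Submodule S M) : Prop where
  smul_eq : ∀ a : M, a ≠ 0 → ∀ E : Submodule S M, E ≠ ⊥ → star (a • E) = a • star E
  le_star : ∀ E : Submodule S M, E ≠ ⊥ → E ≤ star E
  mono : ∀ E F : Submodule S M, E ≠ ⊥ → F ≠ ⊥ → E ≤ F → star E ≤ star F
  idem : ∀ E : Submodule S M, E ≠ ⊥ → star (star E) = star E

variable {R K L : Type*} [CommRing R] [IsDomain R]
  [Field K] [Algebra R K] [IsFractionRing R K]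
  [Field L] [Algebra R[X] L] [IsFractionRing R[X] L]

/-- `E[X]`: the `R[X]`-submodule of `L = K(X)` generated by `E ⊆ K`,
where `ι : K →+* L` is the canonical embedding. -/
noncomputable def polyExt (ι : K →+* L) (E : Submodule R K) : Submodule R[X] L :=
  Submodule.span R[X] (ι '' (E : Set K))

/-- The operation `E ↦ E^{\bar{*}} = (E[X])^* ∩ K` on `R`-submodules of `K` induced by a
semistar operation `*` on `R[X]`. -/
def barStar (star : Submodule R[X] L → Submodule R[X] L) (ι : K →+* L)
    (hι : ∀ r : R, ι (algebraMap R K r) = algebraMap R[X] L (C r))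
    (E : Submodule R K) : Submodule R K where
  carrier := ι ⁻¹' (star (polyExt ι E) : Set L)
  add_mem' := fun {a b} ha hb => by
    simp only [Set.mem_preimage, SetLike.mem_coe, map_add] at *
    exact (star (polyExt ι _)).add_mem ha hb
  zero_mem' := by
    simp only [Set.mem_preimage, SetLike.mem_coe, map_zero]
    exact (star (polyExt ι _)).zero_mem
  smul_mem' := fun r x hx => by
    simp only [Set.mem_preimage, SetLike.mem_coe] at *
    have h : ι (r • x) = (C r : R[X]) • ι x := by
      rw [Algebra.smul_def, map_mul, hι, Algebra.smul_def]
    rw [h]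
    exact (star (polyExt ι _)).smul_mem _ hx

/-- A semistar operation has *finite character* if
`E^* = ⋃ {F^* : F nonzero finitely generated, F ⊆ E}`. -/
def SemistarFiniteCharacter (S M : Type*) [CommRing S] [Field M] [Algebra S M]
    (star : Submodule S M → Submodule S M) : Prop :=
  ∀ E : Submodule S M, E ≠ ⊥ → ∀ x : M,
    x ∈ star E ↔ ∃ F : Submodule S M, F ≠ ⊥ ∧ F.FG ∧ F ≤ E ∧ x ∈ star F

lemma polyExt_mono (ι : K →+* L) {E F : Submodule R K} (h : E ≤ F) :
    polyExt (R := R) ι E ≤ polyExt ι F :=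
  Submodule.span_mono (Set.image_mono h)

lemma polyExt_ne_bot (ι : K →+* L) {E : Submodule R K} (hE : E ≠ ⊥) :
    polyExt (R := R) ι E ≠ ⊥ := by
  obtain ⟨e, heE, he⟩ := Submodule.exists_mem_ne_zero_of_ne_bot hE
  intro h
  have : ι e ∈ polyExt (R := R) ι E :=
    Submodule.subset_span ⟨e, heE, rfl⟩
  rw [h, Submodule.mem_bot] at this
  exact he (by simpa using ι.injective (by simpa using this))

lemma mem_barStar_iff (star : Submodule R[X] L → Submodule R[X] L) (ι : K →+* L)
    (hι : ∀ r : R, ι (algebraMap R K r) = algebraMap R[X] L (C r))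
    (E : Submodule R K) (x : K) :
    x ∈ barStar star ι hι E ↔ ι x ∈ star (polyExt ι E) := Iff.rfl

/-- if `*` has finite character, so does `\bar{*}`. -/
theorem barStar_finiteCharacter
    (star : Submodule R[X] L → Submodule R[X] L)
    (hstar : IsSemistarOperation R[X] L star)
    (hfc : SemistarFiniteCharacter R[X] L star)
    (ι : K →+* L)
    (hι : ∀ r : R, ι (algebraMap R K r) = algebraMap R[X] L (C r)) :
    SemistarFiniteCharacter R K (barStar star ι hι) := by
  classical
  intro E hE x
  rw [mem_barStar_iff]
  constructor
  · intro hx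
    obtain ⟨G, hG0, hGfg, hGle, hxG⟩ :=
      (hfc _ (polyExt_ne_bot ι hE) (ι x)).mp hx
    obtain ⟨e0, he0E, he0⟩ := Submodule.exists_mem_ne_zero_of_ne_bot hE
    obtain ⟨s, hs⟩ := hGfg
    have hgen : ∀ g ∈ s, ∃ t : Finset K, ↑t ⊆ (E : Set K) ∧
        g ∈ Submodule.span R[X] (ι '' (t : Set K)) := by
      intro g hg
      have hgE : g ∈ Submodule.span R[X] (ι '' (E : Set K)) := by
        have : g ∈ G := hs ▸ Submodule.subset_span hg
        exact hGle this
      obtain ⟨t', ht'sub, hgt'⟩ := Submodule.mem_span_finite_of_mem_span hgE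
      obtain ⟨t, htE, htim⟩ := Finset.subset_set_image_iff.mp ht'sub
      exact ⟨t, htE, by rw [← Finset.coe_image, htim]; exact hgt'⟩
    choose t htE hgt using hgen
    set A : Finset K := insert e0 (s.attach.biUnion fun g => t g.1 g.2) with hA
    have hAE : (A : Set K) ⊆ (E : Set K) := by
      intro a ha
      simp only [hA, Finset.coe_insert, Set.mem_insert_iff, Finset.coe_biUnion,
        Set.mem_iUnion] at ha
      rcases ha with rfl | ⟨g, _, hg⟩
      · exact he0E
      · exact htE _ _ hg
    refine ⟨Submodule.span R (A : Set K), ?_, ⟨A, rfl⟩, ?_, ?_⟩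
    · intro h
      have : e0 ∈ Submodule.span R (A : Set K) :=
        Submodule.subset_span (by simp [hA])
      rw [h, Submodule.mem_bot] at this
      exact he0 this
    · exact Submodule.span_le.mpr hAE
    · rw [mem_barStar_iff]
      have hGF : G ≤ polyExt ι (Submodule.span R (A : Set K)) := by
        rw [← hs, Submodule.span_le]
        intro g hg
        have : g ∈ Submodule.span R[X] (ι '' ((t g hg : Finset K) : Set K)) :=
          hgt g hg
        refine Submodule.span_mono (Set.image_mono ?_) this
        refine subset_trans ?_ Submodule.subset_span
        intro a ha
        simp only [hA, Finset.coe_insert, Set.mem_insert_iff, Finset.coe_biUnion,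
          Set.mem_iUnion]
        exact Or.inr ⟨⟨g, hg⟩, Finset.mem_attach _ _, ha⟩
      have hF0 : Submodule.span R (A : Set K) ≠ ⊥ := by
        intro h
        have : e0 ∈ Submodule.span R (A : Set K) :=
          Submodule.subset_span (by simp [hA])
        rw [h, Submodule.mem_bot] at this
        exact he0 this
      exact hstar.mono G _ hG0 (polyExt_ne_bot ι hF0) hGF hxG
  · rintro ⟨F, hF0, _, hFE, hxF⟩
    rw [mem_barStar_iff] at hxF
    exact hstar.mono _ _ (polyExt_ne_bot ι hF0) (polyExt_ne_bot ι hE)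
      (polyExt_mono ι hFE) hxF
end

section
/- Let R be an integral domain, X an indeterminate over R, and * a star operation of finite character on R[X]. The following statements are equivalent: (a) for every upper to zero Q in R[X], c(Q)^{\bar{*}} = R; (b) for every upper to zero Q in R[X], there exists g ∈ Q with c(g)^{\bar{*}} = R; (c) Q ⊄ p[X] for each upper to zero Q in R[X] and each \bar{*}-prime ideal p of R; (d) Q ⊄ M[X] for each upper to zero Q in R[X] and each \bar{*}-maximal ideal M of R. -/
open Polynomial

/-- A *star operation* on a domain `S` with quotient field `M`: a map on the nonzero
fractional ideals of `S` satisfying `(aI)^* = aI^*`, `I ⊆ I^*`, monotonicity,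
idempotency and `S^* = S`. -/
structure IsStarOperation (S M : Type*) [CommRing S] [IsDomain S] [Field M] [Algebra S M]
    [IsFractionRing S M]
    (star : FractionalIdeal (nonZeroDivisors S) M → FractionalIdeal (nonZeroDivisors S) M) :
    Prop where
  smul_eq : ∀ a : M, a ≠ 0 → ∀ I, I ≠ 0 →
    star (FractionalIdeal.spanSingleton (nonZeroDivisors S) a * I) =
      FractionalIdeal.spanSingleton (nonZeroDivisors S) a * star I
  le_star : ∀ I, I ≠ 0 → I ≤ star I
  mono : ∀ I J, I ≠ 0 → J ≠ 0 → I ≤ J → star I ≤ star J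
  idem : ∀ I, I ≠ 0 → star (star I) = star I
  star_one : star 1 = 1

/-- A star operation has *finite character* if
`I^* = ⋃ {J^* : J nonzero finitely generated fractional ideal, J ⊆ I}`. -/
def StarFiniteCharacter (S M : Type*) [CommRing S] [IsDomain S] [Field M] [Algebra S M]
    [IsFractionRing S M]
    (star : FractionalIdeal (nonZeroDivisors S) M → FractionalIdeal (nonZeroDivisors S) M) :
    Prop :=
  ∀ I, I ≠ 0 → ∀ x : M,
    x ∈ star I ↔ ∃ J : FractionalIdeal (nonZeroDivisors S) M, J ≠ 0 ∧ (J : Submodule S M).FG ∧ J ≤ I ∧ x ∈ star J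

/-- `Q` is a `*`-maximal ideal: a proper nonzero integral `*`-ideal which is maximal
among proper integral `*`-ideals. -/
def IsStarMaximal {S M : Type*} [CommRing S] [IsDomain S] [Field M] [Algebra S M]
    [IsFractionRing S M]
    (star : FractionalIdeal (nonZeroDivisors S) M → FractionalIdeal (nonZeroDivisors S) M)
    (Q : Ideal S) : Prop :=
  Q ≠ ⊥ ∧ Q ≠ ⊤ ∧ star ↑Q = (Q : FractionalIdeal (nonZeroDivisors S) M) ∧
    ∀ J : Ideal S, J ≠ ⊥ → J ≠ ⊤ → star ↑J = (J : FractionalIdeal (nonZeroDivisors S) M) →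
      Q ≤ J → Q = J

/-- An *upper to zero* in `R[X]`: a nonzero prime ideal `Q` with `Q ∩ R = (0)`. -/
def IsUpperToZero {R : Type*} [CommRing R] [IsDomain R] (Q : Ideal R[X]) : Prop :=
  Q.IsPrime ∧ Q ≠ ⊥ ∧ Q.comap (C : R →+* R[X]) = ⊥

/-- `c(Q)`: the content of an ideal `Q` of `R[X]`, the ideal of `R` generated by the
coefficients of all elements of `Q`. -/
def contentIdeal {R : Type*} [CommRing R] (Q : Ideal R[X]) : Ideal R :=
  Ideal.span {a : R | ∃ f ∈ Q, ∃ n, f.coeff n = a}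

/-- `c(f)`: the content of a polynomial, the ideal generated by its coefficients. -/
def coeffIdeal {R : Type*} [CommRing R] (f : R[X]) : Ideal R :=
  Ideal.span {a : R | ∃ n, f.coeff n = a}

variable {R K L : Type*} [CommRing R] [IsDomain R]
  [Field K] [Algebra R K] [IsFractionRing R K]
  [Field L] [Algebra R[X] L] [IsFractionRing R[X] L]

/-- `I^{\bar{*}} = (I[X])^* ∩ K` for an integral ideal `I` of `R`, as a subset of `K`;
here `ι : K →+* L = K(X)` is the canonical embedding. -/
def barStarSet
    (star : FractionalIdeal (nonZeroDivisors R[X]) L → FractionalIdeal (nonZeroDivisors R[X]) L)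
    (ι : K →+* L) (I : Ideal R) : Set K :=
  {x : K | ι x ∈ star ((I.map (C : R →+* R[X]) : Ideal R[X]) :
      FractionalIdeal (nonZeroDivisors R[X]) L)}

/-- `p` is a `\bar{*}`-prime ideal of `R`: a (nonzero) prime ideal which is a
`\bar{*}`-ideal, i.e. `p^{\bar{*}} = p`. -/
def IsBarStarPrime
    (star : FractionalIdeal (nonZeroDivisors R[X]) L → FractionalIdeal (nonZeroDivisors R[X]) L)
    (ι : K →+* L) (p : Ideal R) : Prop :=
  p ≠ ⊥ ∧ p.IsPrime ∧ barStarSet star ι p = algebraMap R K '' (p : Set R)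

/-- `M` is a `\bar{*}`-maximal ideal of `R`: a proper nonzero integral `\bar{*}`-ideal
maximal among proper integral `\bar{*}`-ideals. -/
def IsBarStarMaximal
    (star : FractionalIdeal (nonZeroDivisors R[X]) L → FractionalIdeal (nonZeroDivisors R[X]) L)
    (ι : K →+* L) (M : Ideal R) : Prop :=
  M ≠ ⊥ ∧ M ≠ ⊤ ∧ barStarSet star ι M = algebraMap R K '' (M : Set R) ∧
    ∀ J : Ideal R, J ≠ ⊥ → J ≠ ⊤ → barStarSet star ι J = algebraMap R K '' (J : Set R) →
      M ≤ J → M = J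

section Aux
set_option linter.unusedSectionVars false

variable (star : FractionalIdeal (nonZeroDivisors R[X]) L → FractionalIdeal (nonZeroDivisors R[X]) L)

theorem mapC_ne_bot {I : Ideal R} (h : I ≠ ⊥) : I.map (C : R →+* R[X]) ≠ ⊥ := by
  rwa [Ne, Ideal.map_eq_bot_iff_of_injective (C_injective)]

theorem coeIdeal_mapC_ne_zero {I : Ideal R} (h : I ≠ ⊥) :
    ((I.map (C : R →+* R[X]) : Ideal R[X]) : FractionalIdeal (nonZeroDivisors R[X]) L) ≠ 0 :=
  FractionalIdeal.coeIdeal_ne_zero.mpr (mapC_ne_bot h)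

theorem starOp_ne_zero (hstar : IsStarOperation R[X] L star) {A : Ideal R[X]} (hA : A ≠ ⊥) :
    star (A : FractionalIdeal (nonZeroDivisors R[X]) L) ≠ 0 := by
  intro h0
  have hle := hstar.le_star _ (FractionalIdeal.coeIdeal_ne_zero.mpr hA)
  rw [h0] at hle
  exact FractionalIdeal.coeIdeal_ne_zero.mpr hA (le_antisymm hle (FractionalIdeal.zero_le _))

theorem star_integral_le_one (hstar : IsStarOperation R[X] L star) {A : Ideal R[X]} (hA : A ≠ ⊥) :
    star (A : FractionalIdeal (nonZeroDivisors R[X]) L) ≤ 1 := by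
  have h1 : ((⊤ : Ideal R[X]) : FractionalIdeal (nonZeroDivisors R[X]) L) = 1 :=
    FractionalIdeal.coeIdeal_top _
  have := hstar.mono (A : FractionalIdeal (nonZeroDivisors R[X]) L) _
    (FractionalIdeal.coeIdeal_ne_zero.mpr hA) (h1 ▸ one_ne_zero)
    ((FractionalIdeal.coeIdeal_le_coeIdeal L).mpr le_top)
  rwa [h1, hstar.star_one] at this

/-- The induced operation on integral ideals of `R`: `r ∈ preStar I` iff
`C r ∈ (I[X])^*`. -/
def preStar (I : Ideal R) : Ideal R where
  carrier := {r : R | algebraMap R[X] L (C r) ∈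
    star ((I.map (C : R →+* R[X]) : Ideal R[X]) : FractionalIdeal (nonZeroDivisors R[X]) L)}
  add_mem' := by
    intro a b ha hb
    simp only [Set.mem_setOf_eq, map_add] at *
    exact FractionalIdeal.mem_coe.mp
      (Submodule.add_mem _ (FractionalIdeal.mem_coe.mpr ha) (FractionalIdeal.mem_coe.mpr hb))
  zero_mem' := by
    simp only [Set.mem_setOf_eq, map_zero]
    exact FractionalIdeal.mem_coe.mp (Submodule.zero_mem _)
  smul_mem' := by
    intro c x hx
    simp only [Set.mem_setOf_eq, smul_eq_mul, map_mul] at *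
    have := Submodule.smul_mem
      (star ((I.map (C : R →+* R[X]) : Ideal R[X]) :
        FractionalIdeal (nonZeroDivisors R[X]) L) : Submodule R[X] L) (C c)
      (FractionalIdeal.mem_coe.mpr hx)
    rw [Algebra.smul_def] at this
    exact FractionalIdeal.mem_coe.mp this

theorem mem_preStar {I : Ideal R} {r : R} :
    r ∈ preStar star I ↔ algebraMap R[X] L (C r) ∈
      star ((I.map (C : R →+* R[X]) : Ideal R[X]) : FractionalIdeal (nonZeroDivisors R[X]) L) :=
  Iff.rfl

theorem coeIdeal_mapC_le {N : FractionalIdeal (nonZeroDivisors R[X]) L} {I : Ideal R}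
    (h : ∀ r ∈ I, algebraMap R[X] L (C r) ∈ N) :
    ((I.map (C : R →+* R[X]) : Ideal R[X]) : FractionalIdeal (nonZeroDivisors R[X]) L) ≤ N := by
  intro x hx
  obtain ⟨p, hp, rfl⟩ := (FractionalIdeal.mem_coeIdeal _).mp hx
  have hp' : p ∈ Ideal.span ((C : R →+* R[X]) '' (I : Set R)) := hp
  refine Submodule.span_induction ?_ ?_ ?_ ?_ hp'
  · rintro q ⟨r, hr, rfl⟩
    exact h r hr
  · simp only [map_zero]
    exact FractionalIdeal.mem_coe.mp (Submodule.zero_mem _)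
  · intro x y _ _ hx hy
    simp only [map_add]
    exact FractionalIdeal.mem_coe.mp (add_mem (FractionalIdeal.mem_coe.mpr hx)
      (FractionalIdeal.mem_coe.mpr hy))
  · intro a x _ hx
    simp only [smul_eq_mul, map_mul, ← Algebra.smul_def]
    exact FractionalIdeal.mem_coe.mp (Submodule.smul_mem _ a (FractionalIdeal.mem_coe.mpr hx))

theorem le_preStar (hstar : IsStarOperation R[X] L star) {I : Ideal R} (hI : I ≠ ⊥) :
    I ≤ preStar star I := by
  intro r hr
  rw [mem_preStar]
  refine hstar.le_star _ (coeIdeal_mapC_ne_zero hI) ?_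
  exact (FractionalIdeal.mem_coeIdeal _).mpr ⟨C r, Ideal.mem_map_of_mem _ hr, rfl⟩

theorem preStar_ne_bot (hstar : IsStarOperation R[X] L star) {I : Ideal R} (hI : I ≠ ⊥) :
    preStar star I ≠ ⊥ := by
  intro h
  exact hI (le_antisymm (h ▸ le_preStar star hstar hI) bot_le)

theorem star_mapC_preStar_le (hstar : IsStarOperation R[X] L star) {I : Ideal R} (hI : I ≠ ⊥) :
    star (((preStar star I).map (C : R →+* R[X]) : Ideal R[X]) :
        FractionalIdeal (nonZeroDivisors R[X]) L) ≤
      star ((I.map (C : R →+* R[X]) : Ideal R[X]) : FractionalIdeal (nonZeroDivisors R[X]) L) := by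
  have h1 : (((preStar star I).map (C : R →+* R[X]) : Ideal R[X]) :
      FractionalIdeal (nonZeroDivisors R[X]) L) ≤
      star ((I.map (C : R →+* R[X]) : Ideal R[X]) : FractionalIdeal (nonZeroDivisors R[X]) L) :=
    coeIdeal_mapC_le fun r hr => hr
  have h2 := hstar.mono _ _ (coeIdeal_mapC_ne_zero (preStar_ne_bot star hstar hI))
    (starOp_ne_zero star hstar (mapC_ne_bot hI)) h1
  rwa [hstar.idem _ (coeIdeal_mapC_ne_zero hI)] at h2

theorem preStar_preStar (hstar : IsStarOperation R[X] L star) {I : Ideal R} (hI : I ≠ ⊥) :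
    preStar star (preStar star I) = preStar star I :=
  le_antisymm (fun r hr => star_mapC_preStar_le star hstar hI (mem_preStar star |>.mp hr))
    (le_preStar star hstar (preStar_ne_bot star hstar hI))

theorem mem_range_of_mem_one (ι : K →+* L)
    (hι : ∀ r : R, ι (algebraMap R K r) = algebraMap R[X] L (C r)) {x : K}
    (hx : ι x ∈ (1 : FractionalIdeal (nonZeroDivisors R[X]) L)) :
    x ∈ Set.range (algebraMap R K) := by
  obtain ⟨f, hf⟩ := (FractionalIdeal.mem_one_iff _).mp hx
  obtain ⟨⟨a, b⟩, hx'⟩ := IsLocalization.surj (nonZeroDivisors R) x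
  have hb0 : (b : R) ≠ 0 := nonZeroDivisors.ne_zero b.2
  have hbK : algebraMap R K b ≠ 0 := fun h =>
    hb0 (IsFractionRing.injective R K (h.trans (map_zero _).symm))
  have key : f * C (b : R) = C a := by
    apply IsFractionRing.injective R[X] L
    rw [map_mul, hf, ← hι, ← hι, ← map_mul, hx']
  by_cases hf0 : f = 0
  · have ha : (a : R) = 0 := by
      have : C a = 0 := by rw [← key, hf0, zero_mul]
      exact C_injective (by simpa using this)
    refine ⟨0, ?_⟩
    have : x * algebraMap R K b = 0 := by rw [hx', ha, map_zero]
    rcases mul_eq_zero.mp this with h | h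
    · rw [map_zero, h]
    · exact absurd h hbK
  · have hdeg : f.natDegree = 0 := by
      have hCb : (C (b : R) : R[X]) ≠ 0 := fun h => hb0 (by simpa using C_injective (h.trans C_0.symm))
      have := congrArg natDegree key
      rwa [natDegree_mul hf0 hCb, natDegree_C, natDegree_C, add_zero] at this
    obtain ⟨r, hr⟩ : ∃ r, C r = f := ⟨f.coeff 0, (eq_C_coeff_zero_iff_natDegree_eq_zero.mpr hdeg).symm⟩
    have hab : r * b = a := by
      apply C_injective
      rw [map_mul, hr, key]
    refine ⟨r, ?_⟩
    have : algebraMap R K r * algebraMap R K b = x * algebraMap R K b := by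
      rw [← map_mul, hab, hx']
    exact (mul_right_cancel₀ hbK this)

theorem barStarSet_eq_image_iff (hstar : IsStarOperation R[X] L star) (ι : K →+* L)
    (hι : ∀ r : R, ι (algebraMap R K r) = algebraMap R[X] L (C r)) {I : Ideal R} (hI : I ≠ ⊥) :
    barStarSet star ι I = algebraMap R K '' (I : Set R) ↔ preStar star I = I := by
  constructor
  · intro h
    refine le_antisymm (fun r hr => ?_) (le_preStar star hstar hI)
    have : algebraMap R K r ∈ barStarSet star ι I := by
      simp only [barStarSet, Set.mem_setOf_eq, hι]
      exact hr
    rw [h] at this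
    obtain ⟨i, hi, hir⟩ := this
    rwa [← IsFractionRing.injective R K hir]
  · intro h
    ext x
    constructor
    · intro hx
      have hx1 : ι x ∈ (1 : FractionalIdeal (nonZeroDivisors R[X]) L) :=
        star_integral_le_one star hstar (mapC_ne_bot hI) hx
      obtain ⟨r, rfl⟩ := mem_range_of_mem_one ι hι hx1
      have hr : r ∈ preStar star I := by
        rw [mem_preStar, ← hι]
        exact hx
      exact ⟨r, h ▸ hr, rfl⟩
    · rintro ⟨i, hi, rfl⟩
      simp only [barStarSet, Set.mem_setOf_eq, hι]
      exact (mem_preStar star).mp (le_preStar star hstar hI hi)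

theorem barStarSet_eq_range_iff (hstar : IsStarOperation R[X] L star) (ι : K →+* L)
    (hι : ∀ r : R, ι (algebraMap R K r) = algebraMap R[X] L (C r)) {I : Ideal R} (hI : I ≠ ⊥) :
    barStarSet star ι I = Set.range (algebraMap R K) ↔
      (1 : L) ∈ star ((I.map (C : R →+* R[X]) : Ideal R[X]) :
        FractionalIdeal (nonZeroDivisors R[X]) L) := by
  constructor
  · intro h
    have : algebraMap R K 1 ∈ barStarSet star ι I := h ▸ ⟨1, rfl⟩
    have h1 : ι (algebraMap R K 1) = 1 := by rw [map_one, map_one]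
    rwa [barStarSet, Set.mem_setOf_eq, h1] at this
  · intro h1
    ext x
    constructor
    · intro hx
      exact mem_range_of_mem_one ι hι (star_integral_le_one star hstar (mapC_ne_bot hI) hx)
    · rintro ⟨r, rfl⟩
      simp only [barStarSet, Set.mem_setOf_eq, hι]
      have := Submodule.smul_mem
        (star ((I.map (C : R →+* R[X]) : Ideal R[X]) :
          FractionalIdeal (nonZeroDivisors R[X]) L) : Submodule R[X] L) (C r)
        (FractionalIdeal.mem_coe.mpr h1)
      rw [Algebra.smul_def, mul_one] at this
      exact FractionalIdeal.mem_coe.mp this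

theorem barStarSet_mono (hstar : IsStarOperation R[X] L star) (ι : K →+* L) {I J : Ideal R}
    (hI : I ≠ ⊥) (hIJ : I ≤ J) : barStarSet star ι I ⊆ barStarSet star ι J := by
  intro x hx
  have hJ : J ≠ ⊥ := fun h => hI (le_antisymm (h ▸ hIJ) bot_le)
  exact hstar.mono _ _ (coeIdeal_mapC_ne_zero hI) (coeIdeal_mapC_ne_zero hJ)
    ((FractionalIdeal.coeIdeal_le_coeIdeal L).mpr (Ideal.map_mono hIJ)) hx

theorem coeffIdeal_zero : coeffIdeal (0 : R[X]) = ⊥ := by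
  rw [coeffIdeal, ← Ideal.span_zero]
  congr 1
  ext a
  simp [eq_comm]

theorem coeffIdeal_ne_bot {g : R[X]} (hg : g ≠ 0) : coeffIdeal g ≠ ⊥ := by
  intro h
  have : g.leadingCoeff ∈ coeffIdeal g := Ideal.subset_span ⟨g.natDegree, rfl⟩
  rw [h] at this
  exact hg (leadingCoeff_eq_zero.mp (Ideal.mem_bot.mp this))

theorem contentIdeal_ne_bot {Q : Ideal R[X]} (hQ : Q ≠ ⊥) : contentIdeal Q ≠ ⊥ := by
  obtain ⟨f, hfQ, hf0⟩ := Submodule.exists_mem_ne_zero_of_ne_bot hQ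
  intro h
  have : f.leadingCoeff ∈ contentIdeal Q := Ideal.subset_span ⟨f, hfQ, f.natDegree, rfl⟩
  rw [h] at this
  exact hf0 (leadingCoeff_eq_zero.mp (Ideal.mem_bot.mp this))

theorem le_mapC_contentIdeal (Q : Ideal R[X]) : Q ≤ (contentIdeal Q).map (C : R →+* R[X]) := by
  intro f hf
  rw [Ideal.mem_map_C_iff]
  intro n
  exact Ideal.subset_span ⟨f, hf, n, rfl⟩

theorem coeffIdeal_le_of_mem_mapC {g : R[X]} {I : Ideal R}
    (h : g ∈ I.map (C : R →+* R[X])) : coeffIdeal g ≤ I := by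
  rw [coeffIdeal, Ideal.span_le]
  rintro a ⟨n, rfl⟩
  exact Ideal.mem_map_C_iff.mp h n

theorem mem_mapC_of_coeff {g : R[X]} {I : Ideal R} (h : ∀ n, g.coeff n ∈ I) :
    g ∈ I.map (C : R →+* R[X]) := Ideal.mem_map_C_iff.mpr h

theorem coeffIdeal_le_combine (f g : R[X]) :
    coeffIdeal f ≤ coeffIdeal (f + X ^ (f.natDegree + 1) * g) ∧
      coeffIdeal g ≤ coeffIdeal (f + X ^ (f.natDegree + 1) * g) := by
  set k := f.natDegree + 1 with hk
  set h := f + X ^ k * g with hh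
  have hc1 : ∀ n, n ≤ f.natDegree → h.coeff n = f.coeff n := by
    intro n hn
    rw [hh, coeff_add, coeff_X_pow_mul', if_neg (by omega), add_zero]
  have hc2 : ∀ m, h.coeff (m + k) = g.coeff m := by
    intro m
    rw [hh, coeff_add, coeff_X_pow_mul', if_pos (by omega),
      coeff_eq_zero_of_natDegree_lt (by omega), zero_add]
    congr 1
    omega
  constructor
  · rw [coeffIdeal, Ideal.span_le]
    rintro a ⟨n, rfl⟩
    by_cases hn : n ≤ f.natDegree
    · rw [← hc1 n hn]
      exact Ideal.subset_span ⟨n, rfl⟩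
    · rw [coeff_eq_zero_of_natDegree_lt (by omega)]
      exact zero_mem _
  · rw [coeffIdeal, Ideal.span_le]
    rintro a ⟨m, rfl⟩
    rw [← hc2 m]
    exact Ideal.subset_span ⟨m + k, rfl⟩

theorem combine_finset (Q : Ideal R[X]) (s : Finset R[X]) (hs : ∀ f ∈ s, f ∈ Q) :
    ∃ h ∈ Q, ∀ f ∈ s, coeffIdeal f ≤ coeffIdeal h := by
  classical
  induction s using Finset.induction_on with
  | empty => exact ⟨0, Q.zero_mem, fun f hf => absurd hf (Finset.notMem_empty f)⟩
  | @insert a s ha ih =>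
    obtain ⟨h, hhQ, hle⟩ := ih (fun f hf => hs f (Finset.mem_insert_of_mem hf))
    refine ⟨a + X ^ (a.natDegree + 1) * h, ?_, ?_⟩
    · exact Q.add_mem (hs a (Finset.mem_insert_self a s)) (Q.mul_mem_left _ hhQ)
    · intro f hf
      rcases Finset.mem_insert.mp hf with rfl | hf
      · exact (coeffIdeal_le_combine f h).1
      · exact (hle f hf).trans (coeffIdeal_le_combine a h).2

theorem mem_coeffIdeal_of_mem_content (Q : Ideal R[X]) {a : R} (ha : a ∈ contentIdeal Q) :
    ∃ f ∈ Q, a ∈ coeffIdeal f := by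
  have ha' : a ∈ Ideal.span {a : R | ∃ f ∈ Q, ∃ n, f.coeff n = a} := ha
  refine Submodule.span_induction ?_ ?_ ?_ ?_ ha'
  · rintro x ⟨f, hf, n, rfl⟩
    exact ⟨f, hf, Ideal.subset_span ⟨n, rfl⟩⟩
  · exact ⟨0, Q.zero_mem, zero_mem _⟩
  · rintro x y _ _ ⟨f, hfQ, hxf⟩ ⟨g, hgQ, hyg⟩
    refine ⟨f + X ^ (f.natDegree + 1) * g, Q.add_mem hfQ (Q.mul_mem_left _ hgQ), ?_⟩
    exact add_mem ((coeffIdeal_le_combine f g).1 hxf) ((coeffIdeal_le_combine f g).2 hyg)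
  · rintro c x _ ⟨f, hfQ, hxf⟩
    exact ⟨f, hfQ, by simpa using (coeffIdeal f).mul_mem_left c hxf⟩

theorem exists_mem_mapC (Q : Ideal R[X]) {p : R[X]}
    (hp : p ∈ (contentIdeal Q).map (C : R →+* R[X])) :
    ∃ h ∈ Q, p ∈ (coeffIdeal h).map (C : R →+* R[X]) := by
  classical
  have hc : ∀ n ∈ p.support, ∃ f ∈ Q, p.coeff n ∈ coeffIdeal f := fun n _ =>
    mem_coeffIdeal_of_mem_content Q (Ideal.mem_map_C_iff.mp hp n)
  choose F hFQ hF using hc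
  set s : Finset R[X] := p.support.attach.image (fun n => F n.1 n.2) with hs
  have hsQ : ∀ f ∈ s, f ∈ Q := by
    intro f hf
    obtain ⟨n, _, rfl⟩ := Finset.mem_image.mp hf
    exact hFQ n.1 n.2
  obtain ⟨h, hhQ, hle⟩ := combine_finset Q s hsQ
  refine ⟨h, hhQ, mem_mapC_of_coeff ?_⟩
  intro n
  by_cases hn : n ∈ p.support
  · exact hle _ (Finset.mem_image.mpr ⟨⟨n, hn⟩, Finset.mem_attach _ _, rfl⟩) (hF n hn)
  · rw [Polynomial.notMem_support_iff.mp hn]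
    exact zero_mem _

theorem exists_chain_upper {c : Set (Ideal R)} (hdir : DirectedOn (· ≤ ·) c) (hne : c.Nonempty)
    (s : Finset (Ideal R)) (hs : ↑s ⊆ c) : ∃ I ∈ c, ∀ J ∈ s, J ≤ I := by
  classical
  induction s using Finset.induction_on with
  | empty => obtain ⟨I, hI⟩ := hne; exact ⟨I, hI, fun J hJ => absurd hJ (Finset.notMem_empty J)⟩
  | @insert a s ha ih =>
    obtain ⟨I, hIc, hIs⟩ := ih (Set.Subset.trans (by simp [Finset.coe_insert]) hs)
    obtain ⟨I', hI'c, haI', hII'⟩ := hdir a (hs (by simp)) I hIc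
    exact ⟨I', hI'c, fun J hJ => by
      rcases Finset.mem_insert.mp hJ with rfl | hJ
      · exact haI'
      · exact (hIs J hJ).trans hII'⟩

theorem exists_g (hstar : IsStarOperation R[X] L star) (hfc : StarFiniteCharacter R[X] L star)
    {Q : Ideal R[X]} (hQ : Q ≠ ⊥)
    (h1 : (1 : L) ∈ star (((contentIdeal Q).map (C : R →+* R[X]) : Ideal R[X]) :
      FractionalIdeal (nonZeroDivisors R[X]) L)) :
    ∃ g ∈ Q, g ≠ 0 ∧ (1 : L) ∈ star (((coeffIdeal g).map (C : R →+* R[X]) : Ideal R[X]) :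
      FractionalIdeal (nonZeroDivisors R[X]) L) := by
  classical
  have hcQ := contentIdeal_ne_bot hQ
  obtain ⟨J, hJ0, ⟨T, hT⟩, hJle, h1J⟩ := (hfc _ (coeIdeal_mapC_ne_zero hcQ) 1).mp h1
  have hc : ∀ t : L, t ∈ T → ∃ h, h ∈ Q ∧ t ∈ (((coeffIdeal h).map (C : R →+* R[X]) : Ideal R[X]) :
      FractionalIdeal (nonZeroDivisors R[X]) L) := by
    intro t ht
    have htJ : t ∈ J := by
      rw [← FractionalIdeal.mem_coe, ← hT]
      exact Submodule.subset_span ht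
    obtain ⟨p, hp, rfl⟩ := (FractionalIdeal.mem_coeIdeal _).mp (hJle htJ)
    obtain ⟨h, hhQ, hph⟩ := exists_mem_mapC Q hp
    exact ⟨h, hhQ, (FractionalIdeal.mem_coeIdeal _).mpr ⟨p, hph, rfl⟩⟩
  choose F hFQ hFt using hc
  set sT : Finset R[X] := T.attach.image (fun t => F t.1 t.2) with hsT
  have hsTQ : ∀ f ∈ sT, f ∈ Q := by
    intro f hf
    obtain ⟨t, _, rfl⟩ := Finset.mem_image.mp hf
    exact hFQ t.1 t.2
  obtain ⟨g0, hg0Q, hle⟩ := combine_finset Q sT hsTQ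
  have hJg : J ≤ (((coeffIdeal g0).map (C : R →+* R[X]) : Ideal R[X]) :
      FractionalIdeal (nonZeroDivisors R[X]) L) := by
    rw [← FractionalIdeal.coe_le_coe, ← hT]
    refine Submodule.span_le.mpr fun t ht => FractionalIdeal.mem_coe.mpr ?_
    exact (FractionalIdeal.coeIdeal_le_coeIdeal L).mpr
      (Ideal.map_mono (hle _ (Finset.mem_image.mpr ⟨⟨t, ht⟩, Finset.mem_attach _ _, rfl⟩)))
      (hFt t ht)
  have hg0 : g0 ≠ 0 := by
    rintro rfl
    rw [coeffIdeal_zero, Ideal.map_bot, FractionalIdeal.coeIdeal_bot] at hJg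
    exact hJ0 (le_antisymm hJg (FractionalIdeal.zero_le _))
  exact ⟨g0, hg0Q, hg0,
    hstar.mono _ _ hJ0 (coeIdeal_mapC_ne_zero (coeffIdeal_ne_bot hg0)) hJg h1J⟩

theorem isPrime_of_isBarStarMaximal (hstar : IsStarOperation R[X] L star) (ι : K →+* L)
    (hι : ∀ r : R, ι (algebraMap R K r) = algebraMap R[X] L (C r)) {M : Ideal R}
    (hM : IsBarStarMaximal star ι M) : M.IsPrime := by
  obtain ⟨hM0, hMtop, hMbar, hMmax⟩ := hM
  have hMpre : preStar star M = M := (barStarSet_eq_image_iff star hstar ι hι hM0).mp hMbar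
  refine ⟨hMtop, ?_⟩
  intro a b hab
  by_cases ha : a ∈ M
  · exact Or.inl ha
  right
  by_cases hb0 : b = 0
  · rw [hb0]; exact M.zero_mem
  set N := M ⊔ Ideal.span {a} with hN
  have hMN : M ≤ N := le_sup_left
  have hN0 : N ≠ ⊥ := fun h => hM0 (le_bot_iff.mp (h ▸ hMN))
  have haN : a ∈ N := Ideal.mem_sup_right (Ideal.mem_span_singleton_self a)
  set P := preStar star N with hP
  have hNP : N ≤ P := le_preStar star hstar hN0
  have hP0 : P ≠ ⊥ := preStar_ne_bot star hstar hN0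
  have hPpre : preStar star P = P := preStar_preStar star hstar hN0
  have hPtop : P = ⊤ := by
    by_contra hPt
    have hPbar := (barStarSet_eq_image_iff star hstar ι hι hP0).mpr hPpre
    have := hMmax P hP0 hPt hPbar (hMN.trans hNP)
    exact ha (this ▸ hNP haN)
  have h1 : (1 : L) ∈ star ((N.map (C : R →+* R[X]) : Ideal R[X]) :
      FractionalIdeal (nonZeroDivisors R[X]) L) := by
    have h1' : (1 : R) ∈ preStar star N := by rw [← hP, hPtop]; trivial
    simpa using (mem_preStar star).mp h1'
  have hbC : (C b : R[X]) ≠ 0 := fun h => hb0 (by simpa using h)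
  have hbL : algebraMap R[X] L (C b) ≠ 0 := fun h =>
    hbC (IsFractionRing.injective R[X] L (by simpa using h))
  have hmem : algebraMap R[X] L (C b) ∈
      star (FractionalIdeal.spanSingleton (nonZeroDivisors R[X]) (algebraMap R[X] L (C b)) *
        ((N.map (C : R →+* R[X]) : Ideal R[X]) : FractionalIdeal (nonZeroDivisors R[X]) L)) := by
    rw [hstar.smul_eq (algebraMap R[X] L (C b)) hbL _ (coeIdeal_mapC_ne_zero hN0)]
    simpa using FractionalIdeal.mul_mem_mul (FractionalIdeal.mem_spanSingleton_self _ _) h1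
  have hideal : FractionalIdeal.spanSingleton (nonZeroDivisors R[X]) (algebraMap R[X] L (C b)) *
      ((N.map (C : R →+* R[X]) : Ideal R[X]) : FractionalIdeal (nonZeroDivisors R[X]) L) =
      (((Ideal.span {b} * N).map (C : R →+* R[X]) : Ideal R[X]) :
        FractionalIdeal (nonZeroDivisors R[X]) L) := by
    rw [Ideal.map_mul, Ideal.map_span, Set.image_singleton, FractionalIdeal.coeIdeal_mul,
      FractionalIdeal.coeIdeal_span_singleton]
  have hle : Ideal.span {b} * N ≤ M := by
    rw [Ideal.mul_le]
    intro r hr s hs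
    obtain ⟨c, rfl⟩ := Ideal.mem_span_singleton'.mp hr
    obtain ⟨m, hm, t, ht, rfl⟩ := Submodule.mem_sup.mp hs
    obtain ⟨d, rfl⟩ := Ideal.mem_span_singleton'.mp ht
    have heq : c * b * (m + d * a) = c * (b * m) + c * d * (a * b) := by ring
    rw [heq]
    exact M.add_mem (M.mul_mem_left _ (M.mul_mem_left _ hm)) (M.mul_mem_left _ hab)
  have hbN0 : Ideal.span {b} * N ≠ ⊥ := by
    rw [Ne, Ideal.mul_eq_bot]
    push_neg
    exact ⟨by simpa [Ideal.span_singleton_eq_bot] using hb0, hN0⟩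
  rw [hideal] at hmem
  have hfinal := hstar.mono _ _ (coeIdeal_mapC_ne_zero hbN0) (coeIdeal_mapC_ne_zero hM0)
    ((FractionalIdeal.coeIdeal_le_coeIdeal L).mpr (Ideal.map_mono hle)) hmem
  exact hMpre ▸ (mem_preStar star).mpr hfinal

theorem exists_barStarMaximal (hstar : IsStarOperation R[X] L star)
    (hfc : StarFiniteCharacter R[X] L star) (ι : K →+* L)
    (hι : ∀ r : R, ι (algebraMap R K r) = algebraMap R[X] L (C r)) {J0 : Ideal R}
    (hJ0bot : J0 ≠ ⊥) (hJ0top : J0 ≠ ⊤) (hJ0pre : preStar star J0 = J0) :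
    ∃ M, IsBarStarMaximal star ι M ∧ J0 ≤ M := by
  classical
  set s : Set (Ideal R) := {I | I ≠ ⊤ ∧ preStar star I = I ∧ J0 ≤ I} with hs
  have hub : ∀ c ⊆ s, IsChain (· ≤ ·) c → ∀ y ∈ c, ∃ ub ∈ s, ∀ z ∈ c, z ≤ ub := by
    intro c hcs hchain y hy
    refine ⟨sSup c, ⟨?_, ?_, ?_⟩, fun z hz => le_sSup hz⟩
    · intro htop
      have h1 : (1 : R) ∈ sSup c := by rw [htop]; trivial
      obtain ⟨I, hIc, h1I⟩ := (Submodule.mem_sSup_of_directed ⟨y, hy⟩ hchain.directedOn).mp h1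
      exact (hcs hIc).1 (Ideal.eq_top_of_isUnit_mem _ h1I isUnit_one)
    · have hsne : sSup c ≠ ⊥ := by
        intro hbot
        exact hJ0bot (le_bot_iff.mp (hbot ▸ ((hcs hy).2.2.trans (le_sSup hy))))
      refine le_antisymm ?_ (le_preStar star hstar hsne)
      intro r hr
      have hr' := (mem_preStar star).mp hr
      obtain ⟨J, hJ0', ⟨T, hT⟩, hJle, hrJ⟩ := (hfc _ (coeIdeal_mapC_ne_zero hsne) _).mp hr'
      have hc : ∀ t : L, t ∈ T → ∃ I, I ∈ c ∧
          t ∈ ((I.map (C : R →+* R[X]) : Ideal R[X]) :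
            FractionalIdeal (nonZeroDivisors R[X]) L) := by
        intro t ht
        have htJ : t ∈ J := by
          rw [← FractionalIdeal.mem_coe, ← hT]
          exact Submodule.subset_span ht
        obtain ⟨p, hp, rfl⟩ := (FractionalIdeal.mem_coeIdeal _).mp (hJle htJ)
        have hcoef : ∀ n : ℕ, n ∈ p.support → ∃ I, I ∈ c ∧ p.coeff n ∈ I := by
          intro n _
          obtain ⟨I, hIc, hnI⟩ := (Submodule.mem_sSup_of_directed ⟨y, hy⟩
            hchain.directedOn).mp (Ideal.mem_map_C_iff.mp hp n)
          exact ⟨I, hIc, hnI⟩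
        choose F hFc hFmem using hcoef
        set sp : Finset (Ideal R) := p.support.attach.image (fun n => F n.1 n.2) with hsp
        have hspc : ↑sp ⊆ c := by
          intro I hI
          obtain ⟨n, _, rfl⟩ := Finset.mem_image.mp hI
          exact hFc n.1 n.2
        obtain ⟨I, hIc, hle⟩ := exists_chain_upper hchain.directedOn ⟨y, hy⟩ sp hspc
        refine ⟨I, hIc, (FractionalIdeal.mem_coeIdeal _).mpr ⟨p, mem_mapC_of_coeff ?_, rfl⟩⟩
        intro n
        by_cases hn : n ∈ p.support
        · exact hle _ (Finset.mem_image.mpr ⟨⟨n, hn⟩, Finset.mem_attach _ _, rfl⟩) (hFmem n hn)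
        · rw [Polynomial.notMem_support_iff.mp hn]; exact zero_mem _
      choose G hGc hGt using hc
      set sG : Finset (Ideal R) := T.attach.image (fun t => G t.1 t.2) with hsG
      have hsGc : ↑sG ⊆ c := by
        intro I hI
        obtain ⟨t, _, rfl⟩ := Finset.mem_image.mp hI
        exact hGc t.1 t.2
      obtain ⟨I, hIc, hGle⟩ := exists_chain_upper hchain.directedOn ⟨y, hy⟩ sG hsGc
      have hJI : J ≤ ((I.map (C : R →+* R[X]) : Ideal R[X]) :
          FractionalIdeal (nonZeroDivisors R[X]) L) := by
        rw [← FractionalIdeal.coe_le_coe, ← hT]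
        refine Submodule.span_le.mpr fun t ht => FractionalIdeal.mem_coe.mpr ?_
        exact (FractionalIdeal.coeIdeal_le_coeIdeal L).mpr
          (Ideal.map_mono (hGle _ (Finset.mem_image.mpr ⟨⟨t, ht⟩, Finset.mem_attach _ _, rfl⟩)))
          (hGt t ht)
      have hIbot : I ≠ ⊥ := fun h => hJ0bot (le_bot_iff.mp (h ▸ (hcs hIc).2.2))
      have hrI : r ∈ preStar star I := (mem_preStar star).mpr
        (hstar.mono _ _ hJ0' (coeIdeal_mapC_ne_zero hIbot) hJI hrJ)
      rw [(hcs hIc).2.1] at hrI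
      exact le_sSup hIc hrI
    · exact (hcs hy).2.2.trans (le_sSup hy)
  obtain ⟨m, hJ0m, hm⟩ := zorn_le_nonempty₀ s hub J0 ⟨hJ0top, hJ0pre, le_rfl⟩
  have hms : m ∈ s := hm.1
  have hmbot : m ≠ ⊥ := fun h => hJ0bot (le_bot_iff.mp (h ▸ hJ0m))
  refine ⟨m, ⟨hmbot, hms.1, (barStarSet_eq_image_iff star hstar ι hι hmbot).mpr hms.2.1, ?_⟩,
    hJ0m⟩
  intro J' hJ'bot hJ'top hJ'bar hmJ'
  have hJ's : J' ∈ s :=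
    ⟨hJ'top, (barStarSet_eq_image_iff star hstar ι hι hJ'bot).mp hJ'bar, hJ0m.trans hmJ'⟩
  exact le_antisymm hmJ' (hm.2 hJ's hmJ')

end Aux

theorem statement6
    (star : FractionalIdeal (nonZeroDivisors R[X]) L → FractionalIdeal (nonZeroDivisors R[X]) L)
    (hstar : IsStarOperation R[X] L star) (hfc : StarFiniteCharacter R[X] L star)
    (ι : K →+* L) (hι : ∀ r : R, ι (algebraMap R K r) = algebraMap R[X] L (C r)) :
    List.TFAE
      [∀ Q : Ideal R[X], IsUpperToZero Q →
          barStarSet star ι (contentIdeal Q) = Set.range (algebraMap R K),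
       ∀ Q : Ideal R[X], IsUpperToZero Q →
          ∃ g ∈ Q, g ≠ 0 ∧ barStarSet star ι (coeffIdeal g) = Set.range (algebraMap R K),
       ∀ Q : Ideal R[X], IsUpperToZero Q → ∀ p : Ideal R, IsBarStarPrime star ι p →
          ¬ Q ≤ p.map (C : R →+* R[X]),
       ∀ Q : Ideal R[X], IsUpperToZero Q → ∀ M : Ideal R, IsBarStarMaximal star ι M →
          ¬ Q ≤ M.map (C : R →+* R[X])] := by
  tfae_have 1 → 2 := by
    intro h1 Q hQ
    have hQ0 := hQ.2.1
    have hc1 : (1 : L) ∈ star (((contentIdeal Q).map (C : R →+* R[X]) : Ideal R[X]) :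
        FractionalIdeal (nonZeroDivisors R[X]) L) :=
      (barStarSet_eq_range_iff star hstar ι hι (contentIdeal_ne_bot hQ0)).mp (h1 Q hQ)
    obtain ⟨g, hgQ, hg0, hg1⟩ := exists_g star hstar hfc hQ0 hc1
    exact ⟨g, hgQ, hg0,
      (barStarSet_eq_range_iff star hstar ι hι (coeffIdeal_ne_bot hg0)).mpr hg1⟩
  tfae_have 2 → 3 := by
    intro h2 Q hQ p hp hle
    obtain ⟨g, hgQ, hg0, hgbar⟩ := h2 Q hQ
    have hcg : coeffIdeal g ≤ p := coeffIdeal_le_of_mem_mapC (hle hgQ)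
    have hsub := barStarSet_mono star hstar ι (coeffIdeal_ne_bot hg0) hcg
    rw [hgbar, hp.2.2] at hsub
    obtain ⟨i, hi, hir⟩ := hsub ⟨1, rfl⟩
    have h1p : (1 : R) ∈ p := (IsFractionRing.injective R K hir) ▸ hi
    exact hp.2.1.ne_top (Ideal.eq_top_of_isUnit_mem _ h1p isUnit_one)
  tfae_have 3 → 4 := by
    intro h3 Q hQ M hM
    exact h3 Q hQ M ⟨hM.1, isPrime_of_isBarStarMaximal star hstar ι hι hM, hM.2.2.1⟩
  tfae_have 4 → 1 := by
    intro h4 Q hQ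
    by_contra hne
    have hQ0 := hQ.2.1
    have hcQ := contentIdeal_ne_bot hQ0
    set J := preStar star (contentIdeal Q) with hJ
    have hJbot : J ≠ ⊥ := preStar_ne_bot star hstar hcQ
    have hJpre : preStar star J = J := preStar_preStar star hstar hcQ
    have hJtop : J ≠ ⊤ := by
      intro htop
      apply hne
      rw [barStarSet_eq_range_iff star hstar ι hι hcQ]
      have h1J : (1 : R) ∈ preStar star (contentIdeal Q) := by rw [← hJ, htop]; trivial
      simpa using (mem_preStar star).mp h1J
    obtain ⟨M, hM, hJM⟩ := exists_barStarMaximal star hstar hfc ι hι hJbot hJtop hJpre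
    refine h4 Q hQ M hM ?_
    refine (le_mapC_contentIdeal Q).trans (Ideal.map_mono ?_)
    exact (le_preStar star hstar hcQ).trans hJM
  tfae_finish
end
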